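/- Let t ≥ 1 be an integer and let g, h ∈ Sp(4,ℤ). Then g and h lie in the same left coset of ₀Γ'_t (i.e. g·h⁻¹ ∈ ₀Γ'_t) if and only if there exists a unit u ∈ (ℤ/tℤ)ˣ such that the fourth row of g is congruent modulo t to u times the fourth row of h. -/

import Mathlib

open Matrix

noncomputable section

abbrev M4 : Type := Matrix (Fin 4) (Fin 4) ℚ

def Jmat : M4 := !![0,0,1,0; 0,0,0,1; -1,0,0,0; 0,-1,0,0]

/-- Exponent pattern of the paramodular group `Γ_t`: the `(i,j)` entry of an element
lies in `t^(pexp i j) ℤ`. -/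
def pexp : Matrix (Fin 4) (Fin 4) ℤ := !![0,0,0,1; 1,0,1,1; 0,0,0,1; 0,-1,0,0]

lemma pexp_triangle : ∀ i k j : Fin 4, pexp i j ≤ pexp i k + pexp k j := by decide

lemma pexp_diag : ∀ i : Fin 4, pexp i i = 0 := by decide

def rho : Fin 4 → Fin 4 := ![2,3,0,1]
def sgn : Fin 4 → ℤ := ![1,1,-1,-1]
def tgn : Fin 4 → ℤ := ![-1,-1,1,1]

lemma pexp_rho : ∀ i j : Fin 4, pexp (rho j) (rho i) = pexp i j := by
  intro i j; fin_cases i <;> fin_cases j <;> decide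

lemma Jmat_mul_Jmat : Jmat * Jmat = -1 := by
  ext i j
  fin_cases i <;> fin_cases j <;>
    simp [Jmat, Matrix.mul_apply, Fin.sum_univ_four, Matrix.one_apply, Matrix.vecHead, Matrix.vecTail]

lemma sympl_form_inv (g : GL (Fin 4) ℚ) (hg : (g : M4)ᵀ * Jmat * (g : M4) = Jmat) :
    ((g⁻¹ : GL (Fin 4) ℚ) : M4) = -(Jmat * (g : M4)ᵀ * Jmat) := by
  have h1 : (-(Jmat * (g : M4)ᵀ * Jmat)) * (g : M4) = 1 := by
    have h2 : (-(Jmat * (g : M4)ᵀ * Jmat)) * (g : M4) =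
        -(Jmat * ((g : M4)ᵀ * Jmat * (g : M4))) := by noncomm_ring
    rw [h2, hg, Jmat_mul_Jmat]
    simp
  calc ((g⁻¹ : GL (Fin 4) ℚ) : M4) = 1 * ((g⁻¹ : GL (Fin 4) ℚ) : M4) := (one_mul _).symm
    _ = ((-(Jmat * (g : M4)ᵀ * Jmat)) * (g : M4)) * ((g⁻¹ : GL (Fin 4) ℚ) : M4) := by rw [h1]
    _ = (-(Jmat * (g : M4)ᵀ * Jmat)) * ((g : M4) * ((g⁻¹ : GL (Fin 4) ℚ) : M4)) := by
        rw [mul_assoc]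
    _ = -(Jmat * (g : M4)ᵀ * Jmat) := by rw [Units.mul_inv]; rw [mul_one]

lemma inv_entry (g : GL (Fin 4) ℚ) (hg : (g : M4)ᵀ * Jmat * (g : M4) = Jmat) (i j : Fin 4) :
    ((g⁻¹ : GL (Fin 4) ℚ) : M4) i j =
      -((sgn i : ℚ) * (tgn j : ℚ) * (g : M4) (rho j) (rho i)) := by
  rw [sympl_form_inv g hg]
  fin_cases i <;> fin_cases j <;>
    simp [Jmat, rho, sgn, tgn, Matrix.mul_apply, Fin.sum_univ_four, Matrix.vecHead,
      Matrix.vecTail, Matrix.vecMul, dotProduct]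

/-- A rational matrix has integer entries. -/
def IntM (A : M4) : Prop := ∀ i j, ∃ n : ℤ, A i j = (n : ℚ)

lemma IntM.mul {A B : M4} (hA : IntM A) (hB : IntM B) : IntM (A * B) := by
  intro i j
  have key : ∀ k, ∃ n : ℤ, A i k * B k j = (n : ℚ) := fun k => by
    obtain ⟨p, hp⟩ := hA i k
    obtain ⟨q, hq⟩ := hB k j
    exact ⟨p * q, by rw [hp, hq]; push_cast; ring⟩
  choose f hf using key
  refine ⟨∑ k, f k, ?_⟩
  rw [Matrix.mul_apply, Finset.sum_congr rfl (fun k _ => hf k)]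
  push_cast
  rfl

lemma IntM.transpose {A : M4} (hA : IntM A) : IntM Aᵀ := fun i j => hA j i

lemma IntM.neg {A : M4} (hA : IntM A) : IntM (-A) := fun i j => by
  obtain ⟨n, hn⟩ := hA i j
  exact ⟨-n, by rw [Matrix.neg_apply, hn]; push_cast; ring⟩

lemma IntM.one : IntM 1 := fun i j => by
  by_cases h : i = j
  · exact ⟨1, by simp [Matrix.one_apply, h]⟩
  · exact ⟨0, by simp [Matrix.one_apply, h]⟩

def JmatZ : Matrix (Fin 4) (Fin 4) ℤ := !![0,0,1,0; 0,0,0,1; -1,0,0,0; 0,-1,0,0]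

lemma Jmat_eq_map : Jmat = JmatZ.map (Int.cast : ℤ → ℚ) := by
  ext i j
  fin_cases i <;> fin_cases j <;> simp [Jmat, JmatZ, Matrix.vecHead, Matrix.vecTail]

lemma IntM.Jmat : IntM Jmat := fun i j =>
  ⟨JmatZ i j, by rw [Jmat_eq_map]; simp [Matrix.map_apply]⟩

/-- `Sp(4,ℤ)`: the subgroup of `GL(4,ℚ)` of integer matrices `g` with `gᵀ J g = J`. -/
def Sp4Z : Subgroup (GL (Fin 4) ℚ) where
  carrier := {g | IntM (g : M4) ∧ (g : M4)ᵀ * Jmat * (g : M4) = Jmat}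
  one_mem' := ⟨by rw [Units.val_one]; exact IntM.one, by simp⟩
  mul_mem' := by
    rintro a b ⟨hai, haf⟩ ⟨hbi, hbf⟩
    constructor
    · rw [Units.val_mul]; exact hai.mul hbi
    · rw [Units.val_mul, transpose_mul]
      calc (b : M4)ᵀ * (a : M4)ᵀ * Jmat * ((a : M4) * (b : M4))
          = (b : M4)ᵀ * ((a : M4)ᵀ * Jmat * (a : M4)) * (b : M4) := by noncomm_ring
        _ = Jmat := by rw [haf, hbf]
  inv_mem' := by
    rintro a ⟨hai, haf⟩
    constructor
    · rw [sympl_form_inv a haf]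
      exact (((IntM.Jmat.mul hai.transpose).mul IntM.Jmat)).neg
    · have h1 : ((a : M4) * ((a⁻¹ : GL (Fin 4) ℚ) : M4)) = 1 := Units.mul_inv a
      calc ((a⁻¹ : GL (Fin 4) ℚ) : M4)ᵀ * Jmat * ((a⁻¹ : GL (Fin 4) ℚ) : M4)
          = ((a⁻¹ : GL (Fin 4) ℚ) : M4)ᵀ * ((a : M4)ᵀ * Jmat * (a : M4)) *
              ((a⁻¹ : GL (Fin 4) ℚ) : M4) := by rw [haf]
        _ = ((a : M4) * ((a⁻¹ : GL (Fin 4) ℚ) : M4))ᵀ * Jmat *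
              ((a : M4) * ((a⁻¹ : GL (Fin 4) ℚ) : M4)) := by
            rw [transpose_mul]; noncomm_ring
        _ = Jmat := by rw [h1]; simp

/-- The paramodular group `Γ_t`: the subgroup of `Sp(4,ℚ)` of matrices whose entries are
integers except possibly the `(4,2)` entry, which lies in `t⁻¹ℤ`, and whose entries at
positions `(1,4)`, `(2,1)`, `(2,3)`, `(2,4)`, `(3,4)` lie in `tℤ`. -/
def Gamma (t : ℕ) (ht : t ≠ 0) : Subgroup (GL (Fin 4) ℚ) where
  carrier := {g | (g : M4)ᵀ * Jmat * (g : M4) = Jmat ∧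
    ∀ i j, ∃ n : ℤ, (g : M4) i j = (n : ℚ) * (t : ℚ) ^ (pexp i j)}
  one_mem' := by
    constructor
    · simp
    · intro i j
      by_cases hij : i = j
      · subst hij
        exact ⟨1, by simp [Units.val_one, Matrix.one_apply, pexp_diag]⟩
      · exact ⟨0, by simp [Units.val_one, Matrix.one_apply, hij]⟩
  mul_mem' := by
    rintro a b ⟨haf, hap⟩ ⟨hbf, hbp⟩
    have htq : (t : ℚ) ≠ 0 := Nat.cast_ne_zero.mpr ht
    constructor
    · rw [Units.val_mul, transpose_mul]
      calc (b : M4)ᵀ * (a : M4)ᵀ * Jmat * ((a : M4) * (b : M4))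
          = (b : M4)ᵀ * ((a : M4)ᵀ * Jmat * (a : M4)) * (b : M4) := by noncomm_ring
        _ = Jmat := by rw [haf, hbf]
    · intro i j
      have key : ∀ k : Fin 4, ∃ n : ℤ,
          (a : M4) i k * (b : M4) k j = (n : ℚ) * (t : ℚ) ^ (pexp i j) := by
        intro k
        obtain ⟨p, hp⟩ := hap i k
        obtain ⟨q, hq⟩ := hbp k j
        refine ⟨p * q * (t : ℤ) ^ (pexp i k + pexp k j - pexp i j).toNat, ?_⟩
        have hd : (0 : ℤ) ≤ pexp i k + pexp k j - pexp i j := by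
          have := pexp_triangle i k j; omega
        have hcast : ((p * q * (t : ℤ) ^ (pexp i k + pexp k j - pexp i j).toNat : ℤ) : ℚ)
            = (p : ℚ) * (q : ℚ) * (t : ℚ) ^ (pexp i k + pexp k j - pexp i j) := by
          push_cast
          rw [← zpow_natCast (t : ℚ), Int.toNat_of_nonneg hd]
        have hpow : (t : ℚ) ^ (pexp i k + pexp k j - pexp i j) * (t : ℚ) ^ (pexp i j)
            = (t : ℚ) ^ (pexp i k) * (t : ℚ) ^ (pexp k j) := by
          rw [← zpow_add₀ htq, ← zpow_add₀ htq]
          congr 1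
          ring
        rw [hp, hq, hcast, mul_assoc ((p : ℚ) * (q : ℚ)), hpow]
        ring
      choose f hf using key
      refine ⟨∑ k, f k, ?_⟩
      rw [Units.val_mul, Matrix.mul_apply, Finset.sum_congr rfl (fun k _ => hf k),
        ← Finset.sum_mul]
      push_cast
      ring
  inv_mem' := by
    rintro a ⟨haf, hap⟩
    refine ⟨?_, ?_⟩
    · have h1 : ((a : M4) * ((a⁻¹ : GL (Fin 4) ℚ) : M4)) = 1 := Units.mul_inv a
      calc ((a⁻¹ : GL (Fin 4) ℚ) : M4)ᵀ * Jmat * ((a⁻¹ : GL (Fin 4) ℚ) : M4)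
          = ((a⁻¹ : GL (Fin 4) ℚ) : M4)ᵀ * ((a : M4)ᵀ * Jmat * (a : M4)) *
              ((a⁻¹ : GL (Fin 4) ℚ) : M4) := by rw [haf]
        _ = ((a : M4) * ((a⁻¹ : GL (Fin 4) ℚ) : M4))ᵀ * Jmat *
              ((a : M4) * ((a⁻¹ : GL (Fin 4) ℚ) : M4)) := by
            rw [transpose_mul]; noncomm_ring
        _ = Jmat := by rw [h1]; simp
    · intro i j
      obtain ⟨n, hn⟩ := hap (rho j) (rho i)
      refine ⟨-(sgn i * tgn j * n), ?_⟩
      rw [inv_entry a haf i j, hn, ← pexp_rho i j]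
      push_cast
      ring

/-- The matrix `I_t = diag(1, t⁻¹, 1, t)` as an element of `GL(4,ℚ)`. -/
def It (t : ℕ) (ht : t ≠ 0) : GL (Fin 4) ℚ where
  val := diagonal ![1, (t : ℚ)⁻¹, 1, (t : ℚ)]
  inv := diagonal ![1, (t : ℚ), 1, (t : ℚ)⁻¹]
  val_inv := by
    have htq : (t : ℚ) ≠ 0 := Nat.cast_ne_zero.mpr ht
    rw [diagonal_mul_diagonal]
    ext i j
    fin_cases i <;> fin_cases j <;>
      simp [Matrix.diagonal_apply, Matrix.one_apply, Matrix.vecHead, Matrix.vecTail,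
        inv_mul_cancel₀ htq, mul_inv_cancel₀ htq]
  inv_val := by
    have htq : (t : ℚ) ≠ 0 := Nat.cast_ne_zero.mpr ht
    rw [diagonal_mul_diagonal]
    ext i j
    fin_cases i <;> fin_cases j <;>
      simp [Matrix.diagonal_apply, Matrix.one_apply, Matrix.vecHead, Matrix.vecTail,
        inv_mul_cancel₀ htq, mul_inv_cancel₀ htq]

/-- The conjugated paramodular group `Γ'_t = I_t Γ_t I_t⁻¹`. -/
def Gamma' (t : ℕ) (ht : t ≠ 0) : Subgroup (GL (Fin 4) ℚ) :=
  (Gamma t ht).map (MulAut.conj (It t ht)).toMonoidHom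

-- ===== auxiliary development =====

lemma IntM.num_cast {A : M4} (hA : IntM A) (i j : Fin 4) : A i j = ((A i j).num : ℚ) := by
  obtain ⟨n, hn⟩ := hA i j
  rw [hn, Rat.num_intCast]

/-- Entrywise reduction of an integer matrix mod `t`. -/
def ZM (t : ℕ) (A : M4) : Matrix (Fin 4) (Fin 4) (ZMod t) := fun i j => ((A i j).num : ZMod t)

lemma ZM_mul (t : ℕ) {A B : M4} (hA : IntM A) (hB : IntM B) :
    ZM t (A * B) = ZM t A * ZM t B := by
  ext i j
  have h1 : (A * B) i j = ((∑ k, (A i k).num * (B k j).num : ℤ) : ℚ) := by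
    rw [Matrix.mul_apply]
    push_cast
    exact Finset.sum_congr rfl fun k _ => by rw [← hA.num_cast i k, ← hB.num_cast k j]
  show (((A * B) i j).num : ZMod t) = _
  rw [h1, Rat.num_intCast]
  push_cast
  rfl

lemma ZM_one (t : ℕ) : ZM t (1 : M4) = 1 := by
  ext i j
  by_cases h : i = j <;> simp [ZM, Matrix.one_apply, h]

lemma ZM_transpose (t : ℕ) (A : M4) : ZM t Aᵀ = (ZM t A)ᵀ := rfl

def JZmod (t : ℕ) : Matrix (Fin 4) (Fin 4) (ZMod t) := !![0,0,1,0; 0,0,0,1; -1,0,0,0; 0,-1,0,0]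

lemma ZM_Jmat (t : ℕ) : ZM t Jmat = JZmod t := by
  ext i j
  fin_cases i <;> fin_cases j <;>
    simp [ZM, Jmat, JZmod, Matrix.vecHead, Matrix.vecTail]

/-- `Sp(4,ℚ)` as a subgroup of `GL(4,ℚ)`. -/
def SpQ : Subgroup (GL (Fin 4) ℚ) where
  carrier := {g | (g : M4)ᵀ * Jmat * (g : M4) = Jmat}
  one_mem' := by simp
  mul_mem' := by
    rintro a b haf hbf
    show ((a * b : GL (Fin 4) ℚ) : M4)ᵀ * Jmat * ((a * b : GL (Fin 4) ℚ) : M4) = Jmat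
    rw [Units.val_mul, transpose_mul]
    calc (b : M4)ᵀ * (a : M4)ᵀ * Jmat * ((a : M4) * (b : M4))
        = (b : M4)ᵀ * ((a : M4)ᵀ * Jmat * (a : M4)) * (b : M4) := by noncomm_ring
      _ = Jmat := by rw [haf, hbf]
  inv_mem' := by
    rintro a haf
    show ((a⁻¹ : GL (Fin 4) ℚ) : M4)ᵀ * Jmat * ((a⁻¹ : GL (Fin 4) ℚ) : M4) = Jmat
    have h1 : ((a : M4) * ((a⁻¹ : GL (Fin 4) ℚ) : M4)) = 1 := Units.mul_inv a
    calc ((a⁻¹ : GL (Fin 4) ℚ) : M4)ᵀ * Jmat * ((a⁻¹ : GL (Fin 4) ℚ) : M4)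
        = ((a⁻¹ : GL (Fin 4) ℚ) : M4)ᵀ * ((a : M4)ᵀ * Jmat * (a : M4)) *
            ((a⁻¹ : GL (Fin 4) ℚ) : M4) := by rw [haf]
      _ = ((a : M4) * ((a⁻¹ : GL (Fin 4) ℚ) : M4))ᵀ * Jmat *
            ((a : M4) * ((a⁻¹ : GL (Fin 4) ℚ) : M4)) := by
          rw [transpose_mul]; noncomm_ring
      _ = Jmat := by rw [h1]; simp

lemma mem_SpQ_iff (a : GL (Fin 4) ℚ) : a ∈ SpQ ↔ (a : M4)ᵀ * Jmat * (a : M4) = Jmat := Iff.rfl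

lemma It_mem_SpQ (t : ℕ) (ht : t ≠ 0) : It t ht ∈ SpQ := by
  have htq : (t : ℚ) ≠ 0 := Nat.cast_ne_zero.mpr ht
  show ((It t ht : GL (Fin 4) ℚ) : M4)ᵀ * Jmat * ((It t ht : GL (Fin 4) ℚ) : M4) = Jmat
  show (diagonal ![1, (t : ℚ)⁻¹, 1, (t : ℚ)])ᵀ * Jmat * diagonal ![1, (t : ℚ)⁻¹, 1, (t : ℚ)] = Jmat
  rw [Matrix.diagonal_transpose]
  ext i j
  fin_cases i <;> fin_cases j <;>
    simp [Jmat, Matrix.mul_apply, Fin.sum_univ_four, Matrix.diagonal_apply,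
      Matrix.vecHead, Matrix.vecTail, inv_mul_cancel₀ htq, mul_inv_cancel₀ htq]

/-- `k J kᵀ = J` for symplectic `k`. -/
lemma sympl_form_row (k : GL (Fin 4) ℚ) (hk : (k : M4)ᵀ * Jmat * (k : M4) = Jmat) :
    (k : M4) * Jmat * (k : M4)ᵀ = Jmat := by
  have hinv := sympl_form_inv k hk
  have h1 : (k : M4) * -(Jmat * (k : M4)ᵀ * Jmat) = 1 := by
    rw [← hinv]; exact Units.mul_inv k
  have h4 : (k : M4) * Jmat * (k : M4)ᵀ * Jmat = -1 := by
    calc (k : M4) * Jmat * (k : M4)ᵀ * Jmat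
        = -((k : M4) * -(Jmat * (k : M4)ᵀ * Jmat)) := by noncomm_ring
      _ = -1 := by rw [h1]
  calc (k : M4) * Jmat * (k : M4)ᵀ
      = ((k : M4) * Jmat * (k : M4)ᵀ) * -(Jmat * Jmat) := by rw [Jmat_mul_Jmat]; simp
    _ = -(((k : M4) * Jmat * (k : M4)ᵀ * Jmat) * Jmat) := by noncomm_ring
    _ = -((-1 : M4) * Jmat) := by rw [h4]
    _ = Jmat := by simp

def evec : Fin 4 → ℤ := ![0, -1, 0, 1]

/-- Exponent pattern for `Γ'_t` (integer part). -/
def pexp' : Matrix (Fin 4) (Fin 4) ℤ := !![0,1,0,0; 0,0,0,-1; 0,1,0,0; 1,1,1,0]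

lemma pexp'_eq : ∀ i j : Fin 4, pexp' i j = pexp i j + evec i - evec j := by
  intro i j; fin_cases i <;> fin_cases j <;> decide

lemma pexp'_cases : ∀ i j : Fin 4, pexp' i j = -1 ∨ pexp' i j = 0 ∨ pexp' i j = 1 := by
  intro i j; fin_cases i <;> fin_cases j <;> decide

lemma shift_exists (t : ℕ) (ht : t ≠ 0) (x : ℚ) (a b p : ℤ) :
    (∃ n : ℤ, (t : ℚ) ^ (-a) * x * (t : ℚ) ^ b = n * (t : ℚ) ^ p) ↔
      (∃ n : ℤ, x = n * (t : ℚ) ^ (p + a - b)) := by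
  have htq : (t : ℚ) ≠ 0 := Nat.cast_ne_zero.mpr ht
  constructor
  · rintro ⟨n, hn⟩
    refine ⟨n, ?_⟩
    have hx : x = (t : ℚ) ^ a * ((t : ℚ) ^ (-a) * x * (t : ℚ) ^ b) * (t : ℚ) ^ (-b) := by
      rw [show (t:ℚ)^a * ((t:ℚ)^(-a) * x * (t:ℚ)^b) * (t:ℚ)^(-b)
          = ((t:ℚ)^a * (t:ℚ)^(-a)) * x * ((t:ℚ)^b * (t:ℚ)^(-b)) by ring,
        ← zpow_add₀ htq, ← zpow_add₀ htq]
      simp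
    rw [hx, hn, show (t:ℚ)^a * ((n:ℚ) * (t:ℚ)^p) * (t:ℚ)^(-b)
        = (n:ℚ) * ((t:ℚ)^p * (t:ℚ)^a * (t:ℚ)^(-b)) by ring,
      ← zpow_add₀ htq, ← zpow_add₀ htq]
    ring_nf
  · rintro ⟨n, hn⟩
    refine ⟨n, ?_⟩
    rw [hn, show (t:ℚ)^(-a) * ((n:ℚ) * (t:ℚ)^(p+a-b)) * (t:ℚ)^b
        = (n:ℚ) * ((t:ℚ)^(p+a-b) * (t:ℚ)^(-a) * (t:ℚ)^b) by ring,
      ← zpow_add₀ htq, ← zpow_add₀ htq]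
    ring_nf

lemma dinv_eq (t : ℕ) (ht : t ≠ 0) :
    ∀ i : Fin 4, (![1, (t : ℚ), 1, (t : ℚ)⁻¹]) i = (t : ℚ) ^ (-(evec i)) := by
  intro i
  fin_cases i <;> simp [evec, _root_.zpow_neg]

lemma dvec_eq (t : ℕ) (ht : t ≠ 0) :
    ∀ j : Fin 4, (![1, (t : ℚ)⁻¹, 1, (t : ℚ)]) j = (t : ℚ) ^ (evec j) := by
  intro j
  fin_cases j <;> simp [evec, _root_.zpow_neg]

lemma mem_Gamma'_iff (t : ℕ) (ht : t ≠ 0) (k : GL (Fin 4) ℚ)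
    (hkS : (k : M4)ᵀ * Jmat * (k : M4) = Jmat) :
    k ∈ Gamma' t ht ↔ ∀ i j, ∃ n : ℤ, (k : M4) i j = (n : ℚ) * (t : ℚ) ^ (pexp' i j) := by
  rw [Gamma', Subgroup.mem_map_equiv]
  have hconj : (MulAut.conj (It t ht)).symm k = (It t ht)⁻¹ * k * (It t ht) := rfl
  set a : GL (Fin 4) ℚ := (It t ht)⁻¹ * k * (It t ht) with ha
  have haval : (a : M4) = diagonal ![1, (t : ℚ), 1, (t : ℚ)⁻¹] * (k : M4) *
      diagonal ![1, (t : ℚ)⁻¹, 1, (t : ℚ)] := by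
    rw [ha, Units.val_mul, Units.val_mul]
    rfl
  have hentry : ∀ i j, (a : M4) i j =
      (t : ℚ) ^ (-(evec i)) * (k : M4) i j * (t : ℚ) ^ (evec j) := by
    intro i j
    rw [haval, Matrix.mul_diagonal, Matrix.diagonal_mul, dinv_eq t ht, dvec_eq t ht]
  have hform : (a : M4)ᵀ * Jmat * (a : M4) = Jmat := by
    have : a ∈ SpQ := mul_mem (mul_mem (inv_mem (It_mem_SpQ t ht)) hkS) (It_mem_SpQ t ht)
    exact this
  have hmem : ((MulAut.conj (It t ht)).symm k ∈ Gamma t ht) ↔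
      ((a : M4)ᵀ * Jmat * (a : M4) = Jmat ∧
        ∀ i j, ∃ n : ℤ, (a : M4) i j = (n : ℚ) * (t : ℚ) ^ (pexp i j)) := by
    rw [hconj]; exact Iff.rfl
  rw [hmem]
  constructor
  · rintro ⟨-, hp⟩ i j
    have h1 := hp i j
    rw [hentry i j] at h1
    have h2 := (shift_exists t ht ((k : M4) i j) (evec i) (evec j) (pexp i j)).mp h1
    rw [← pexp'_eq i j] at h2
    exact h2
  · intro hp
    refine ⟨hform, fun i j => ?_⟩
    rw [hentry i j]
    refine (shift_exists t ht ((k : M4) i j) (evec i) (evec j) (pexp i j)).mpr ?_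
    rw [← pexp'_eq i j]
    exact hp i j

lemma mem_Gamma'_iff_zmod (t : ℕ) (ht : t ≠ 0) (k : GL (Fin 4) ℚ)
    (hkI : IntM (k : M4)) (hkS : (k : M4)ᵀ * Jmat * (k : M4) = Jmat) :
    k ∈ Gamma' t ht ↔ ∀ i j, pexp' i j = 1 → ZM t (k : M4) i j = 0 := by
  haveI : NeZero t := ⟨ht⟩
  have htq : (t : ℚ) ≠ 0 := Nat.cast_ne_zero.mpr ht
  rw [mem_Gamma'_iff t ht k hkS]
  constructor
  · intro hp i j hij
    obtain ⟨n, hn⟩ := hp i j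
    rw [hij, zpow_one] at hn
    have hval : (k : M4) i j = ((n * t : ℤ) : ℚ) := by rw [hn]; push_cast; ring
    have hnum : ((k : M4) i j).num = n * t := by rw [hval, Rat.num_intCast]
    show (((k : M4) i j).num : ZMod t) = 0
    rw [hnum]
    push_cast
    simp [ZMod.natCast_self]
  · intro hz i j
    obtain ⟨m, hm⟩ := hkI i j
    rcases pexp'_cases i j with h | h | h
    · refine ⟨m * t, ?_⟩
      rw [hm, h]
      push_cast
      rw [_root_.zpow_neg_one]
      field_simp
    · exact ⟨m, by rw [hm, h, zpow_zero, mul_one]⟩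
    · have h0 := hz i j h
      have hnum : ((k : M4) i j).num = m := by rw [hm, Rat.num_intCast]
      rw [show ZM t (k : M4) i j = (((k : M4) i j).num : ZMod t) from rfl, hnum] at h0
      obtain ⟨c, hc⟩ := (ZMod.intCast_zmod_eq_zero_iff_dvd m t).mp h0
      refine ⟨c, ?_⟩
      rw [hm, hc, h, zpow_one]
      push_cast
      ring

/-- Let `t ≥ 1` and `g, h ∈ Sp(4,ℤ)`.  Then `g` and `h` lie in the same left
coset of `₀Γ'_t = Γ'_t ∩ Sp(4,ℤ)` (i.e. `g·h⁻¹ ∈ ₀Γ'_t`) if and only if there is a unit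
`u ∈ (ℤ/tℤ)ˣ` such that the fourth row of `g` is congruent modulo `t` to `u` times the fourth
row of `h`.  (Entries of elements of `Sp(4,ℤ)` are integer-valued rationals, and `Rat.num`
extracts the corresponding integer.) -/
theorem same_coset_iff_fourth_row (t : ℕ) (ht : 1 ≤ t) (g h : GL (Fin 4) ℚ)
    (hg : g ∈ Sp4Z) (hh : h ∈ Sp4Z) :
    g * h⁻¹ ∈ Gamma' t (by omega) ⊓ Sp4Z ↔
      ∃ u : (ZMod t)ˣ, ∀ j : Fin 4,
        ((((g : M4) 3 j).num : ZMod t)) = (u : ZMod t) * (((h : M4) 3 j).num : ZMod t) := by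
  have ht0 : t ≠ 0 := by omega
  haveI : NeZero t := ⟨ht0⟩
  obtain ⟨hgI, hgS⟩ := id hg
  obtain ⟨hhI, hhS⟩ := id hh
  have hkSp : g * h⁻¹ ∈ Sp4Z := mul_mem hg (inv_mem hh)
  obtain ⟨hkI, hkS⟩ := id hkSp
  obtain ⟨hhiI, hhiS⟩ := id (inv_mem hh : h⁻¹ ∈ Sp4Z)
  have hkinvSp : (g * h⁻¹)⁻¹ ∈ Sp4Z := inv_mem hkSp
  obtain ⟨hkiI, hkiS⟩ := id hkinvSp
  set K := ZM t ((g * h⁻¹ : GL (Fin 4) ℚ) : M4) with hKdef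
  set G := ZM t ((g : GL (Fin 4) ℚ) : M4) with hGdef
  set H := ZM t ((h : GL (Fin 4) ℚ) : M4) with hHdef
  set H' := ZM t ((h⁻¹ : GL (Fin 4) ℚ) : M4) with hH'def
  set K' := ZM t (((g * h⁻¹)⁻¹ : GL (Fin 4) ℚ) : M4) with hK'def
  -- basic matrix identities mod t
  have hGKH : G = K * H := by
    rw [hGdef, hKdef, hHdef, ← ZM_mul t hkI hhI, ← Units.val_mul, inv_mul_cancel_right]
  have hKGH' : K = G * H' := by
    rw [hKdef, hGdef, hH'def, ← ZM_mul t hgI hhiI, ← Units.val_mul]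
  have hHH' : H * H' = 1 := by
    rw [hHdef, hH'def, ← ZM_mul t hhI hhiI, ← Units.val_mul, mul_inv_cancel, Units.val_one,
      ZM_one]
  have hKK' : K * K' = 1 := by
    rw [hKdef, hK'def, ← ZM_mul t hkI hkiI, ← Units.val_mul, mul_inv_cancel, Units.val_one,
      ZM_one]
  have hKJK : K * JZmod t * Kᵀ = JZmod t := by
    have hq := sympl_form_row (g * h⁻¹) hkS
    have := congrArg (ZM t) hq
    rwa [ZM_mul t (hkI.mul IntM.Jmat) hkI.transpose, ZM_mul t hkI IntM.Jmat, ZM_Jmat,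
      ZM_transpose] at this
  rw [Subgroup.mem_inf, mem_Gamma'_iff_zmod t ht0 (g * h⁻¹) hkI hkS]
  constructor
  · rintro ⟨h5, -⟩
    have e30 : K 3 0 = 0 := h5 3 0 rfl
    have e31 : K 3 1 = 0 := h5 3 1 rfl
    have e32 : K 3 2 = 0 := h5 3 2 rfl
    have hone : K 3 3 * K' 3 3 = 1 := by
      have h33 := congrFun (congrFun hKK' 3) 3
      rw [Matrix.mul_apply, Fin.sum_univ_four, e30, e31, e32] at h33
      simpa [Matrix.one_apply] using h33
    obtain ⟨u, hu⟩ := IsUnit.of_mul_eq_one _ hone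
    refine ⟨u, fun j => ?_⟩
    have hrow := congrFun (congrFun hGKH 3) j
    rw [Matrix.mul_apply, Fin.sum_univ_four, e30, e31, e32, ← hu] at hrow
    have hgoal : G 3 j = (u : ZMod t) * H 3 j := by rw [hrow]; ring
    exact hgoal
  · rintro ⟨u, hu⟩
    have hG3 : ∀ m : Fin 4, G 3 m = (u : ZMod t) * H 3 m := hu
    have hK3 : ∀ j : Fin 4, K 3 j = (u : ZMod t) * (1 : Matrix (Fin 4) (Fin 4) (ZMod t)) 3 j := by
      intro j
      have h1 := congrFun (congrFun hKGH' 3) j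
      rw [Matrix.mul_apply, Fin.sum_univ_four, hG3 0, hG3 1, hG3 2, hG3 3] at h1
      have h2 := congrFun (congrFun hHH' 3) j
      rw [Matrix.mul_apply, Fin.sum_univ_four] at h2
      rw [h1, ← h2]
      ring
    have e30 : K 3 0 = 0 := by simpa [Matrix.one_apply] using hK3 0
    have e31 : K 3 1 = 0 := by simpa [Matrix.one_apply, Fin.ext_iff] using hK3 1
    have e32 : K 3 2 = 0 := by simpa [Matrix.one_apply, Fin.ext_iff] using hK3 2
    have e33 : K 3 3 = (u : ZMod t) := by simpa [Matrix.one_apply] using hK3 3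
    have jz0 : JZmod t 3 0 = 0 := rfl
    have jz1 : JZmod t 3 1 = -1 := rfl
    have jz2 : JZmod t 3 2 = 0 := rfl
    have jz3 : JZmod t 3 3 = 0 := rfl
    have e01 : K 0 1 = 0 := by
      have h1 := congrFun (congrFun hKJK 3) 0
      simp only [Matrix.mul_apply, Fin.sum_univ_four, Matrix.transpose_apply] at h1
      rw [e30, e31, e32, e33, jz0, jz1, jz2, jz3] at h1
      have h2 : (u : ZMod t) * K 0 1 = 0 := by linear_combination -h1
      exact (Units.mul_right_eq_zero u).mp h2
    have e21 : K 2 1 = 0 := by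
      have h1 := congrFun (congrFun hKJK 3) 2
      simp only [Matrix.mul_apply, Fin.sum_univ_four, Matrix.transpose_apply] at h1
      rw [e30, e31, e32, e33, jz0, jz1, jz2, jz3] at h1
      have h2 : (u : ZMod t) * K 2 1 = 0 := by linear_combination -h1
      exact (Units.mul_right_eq_zero u).mp h2
    refine ⟨fun i j hij => ?_, hkSp⟩
    fin_cases i <;> fin_cases j <;>
      first
        | exact e01 | exact e21 | exact e30 | exact e31 | exact e32
        | exact absurd hij (by decide)

end
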